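/- arXiv:1908.08493 — 9 statements merged into one kernel-verified Lean document; each statement's English description precedes it below -/
import Mathlib

section
/- Let ℓ > 0, A_max > 0, V_max = √(ℓ·A_max) and h = 2·√(ℓ/A_max). For every p ∈ ℝ and every v ∈ [0, V_max], the constant acceleration a = (V_max − 2v)/h satisfies |a| ≤ A_max, the position after one time step equals p + h·v + (h²/2)·a = p + ℓ, and the velocity after one time step equals v + h·a = V_max − v, which again lies in the interval [0, V_max]. -/
/-- one forward step along the path direction (x-coordinate of Lemma 1). -/
theorem stmt_0 (ℓ Amax Vmax h : ℝ) (hℓ : 0 < ℓ) (hA : 0 < Amax)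
    (hV : Vmax = Real.sqrt (ℓ * Amax)) (hh : h = 2 * Real.sqrt (ℓ / Amax))
    (p v : ℝ) (hv : v ∈ Set.Icc (0 : ℝ) Vmax) :
    |(Vmax - 2 * v) / h| ≤ Amax ∧
    p + h * v + h ^ 2 / 2 * ((Vmax - 2 * v) / h) = p + ℓ ∧
    v + h * ((Vmax - 2 * v) / h) = Vmax - v ∧
    Vmax - v ∈ Set.Icc (0 : ℝ) Vmax := by
  obtain ⟨hv0, hvV⟩ := hv
  have hVpos : 0 < Vmax := by
    rw [hV]; exact Real.sqrt_pos.mpr (mul_pos hℓ hA)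
  have hhpos : 0 < h := by
    rw [hh]; positivity
  have hVsq : Vmax ^ 2 = ℓ * Amax := by
    rw [hV, sq]; exact Real.mul_self_sqrt (le_of_lt (mul_pos hℓ hA))
  have hhsq : h ^ 2 = 4 * (ℓ / Amax) := by
    rw [hh, mul_pow, sq (Real.sqrt (ℓ / Amax)),
      Real.mul_self_sqrt (le_of_lt (div_pos hℓ hA))]
    ring
  have key : (h * Vmax - 2 * ℓ) * (h * Vmax + 2 * ℓ) = 0 := by
    have : (h * Vmax) ^ 2 = 4 * ℓ ^ 2 := by
      rw [mul_pow, hVsq, hhsq]; field_simp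
    nlinarith [this]
  have hhV : h * Vmax = 2 * ℓ := by
    rcases mul_eq_zero.mp key with h1 | h1
    · linarith
    · nlinarith [mul_pos hhpos hVpos]
  have key2 : (h * Amax - 2 * Vmax) * (h * Amax + 2 * Vmax) = 0 := by
    have : (h * Amax) ^ 2 = 4 * Vmax ^ 2 := by
      rw [mul_pow, hVsq, hhsq]; field_simp
    nlinarith [this]
  have hhA : h * Amax = 2 * Vmax := by
    rcases mul_eq_zero.mp key2 with h1 | h1
    · linarith
    · nlinarith [mul_pos hhpos hA]
  refine ⟨?_, ?_, ?_, ?_, ?_⟩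
  · rw [abs_div, abs_of_pos hhpos, div_le_iff₀ hhpos]
    have : |Vmax - 2 * v| ≤ Vmax := by
      rw [abs_le]; constructor <;> linarith
    nlinarith [this]
  · field_simp; ring
    nlinarith [hhV]
  · field_simp; ring
  · linarith
  · linarith
end

section
/- (Lemma 1, axis-aligned form.) Let ℓ > 0, A_max > 0, V_max = √(ℓ·A_max), h = 2·√(ℓ/A_max). Let ϖ ∈ ℝ^d, let i be a coordinate index, and set ϖ' = ϖ + ℓ·e_i, so that ‖ϖ' − ϖ‖₂ = ℓ. Suppose p ∈ Ω(ϖ), ‖v‖_∞ ≤ V_max, and ⟨v, ϖ' − ϖ⟩ ≥ 0. Then there exists an acceleration a with ‖a‖_∞ ≤ A_max such that the next state p' = p + h·v + (h²/2)·a and v' = v + h·a satisfies p' ∈ Ω(ϖ'), ‖v'‖_∞ ≤ V_max, and ⟨v', ϖ' − ϖ⟩ ≥ 0. -/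
open scoped RealInnerProductSpace

set_option maxHeartbeats 1000000

/-- Lemma 1, axis-aligned form. -/
theorem stmt_2 (d : ℕ) (hd : 1 ≤ d) (ℓ Amax Vmax h : ℝ) (hℓ : 0 < ℓ) (hA : 0 < Amax)
    (hV : Vmax = Real.sqrt (ℓ * Amax)) (hh : h = 2 * Real.sqrt (ℓ / Amax))
    (ϖ p v : EuclideanSpace ℝ (Fin d)) (i : Fin d)
    (hp : ∀ j, |p j - ϖ j| ≤ ℓ)
    (hv : ∀ j, |v j| ≤ Vmax)
    (hdir : 0 ≤ ⟪v, (ϖ + ℓ • EuclideanSpace.single i (1 : ℝ)) - ϖ⟫) :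
    ∃ a : EuclideanSpace ℝ (Fin d),
      (∀ j, |a j| ≤ Amax) ∧
      (∀ j, |(p + h • v + (h ^ 2 / 2) • a) j -
              (ϖ + ℓ • EuclideanSpace.single i (1 : ℝ)) j| ≤ ℓ) ∧
      (∀ j, |(v + h • a) j| ≤ Vmax) ∧
      0 ≤ ⟪v + h • a, (ϖ + ℓ • EuclideanSpace.single i (1 : ℝ)) - ϖ⟫ := by
  have hℓA : 0 < ℓ * Amax := mul_pos hℓ hA
  have hV0 : 0 < Vmax := by rw [hV]; exact Real.sqrt_pos.mpr hℓA
  have hh0 : 0 < h := by rw [hh]; positivity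
  have hh2' : h ^ 2 * Amax = 4 * ℓ := by
    rw [hh, mul_pow, Real.sq_sqrt (by positivity : (0:ℝ) ≤ ℓ / Amax)]
    rw [show (2:ℝ) ^ 2 * (ℓ / Amax) * Amax = 4 * (ℓ / Amax * Amax) by ring,
      div_mul_cancel₀ _ hA.ne']
  have hhA : h * Amax = 2 * Vmax := by
    rw [hh, hV]
    rw [mul_assoc, ← Real.sqrt_sq hA.le, ← Real.sqrt_mul (by positivity)]
    congr 2
    rw [Real.sqrt_sq hA.le]
    field_simp
  have hhV : h * Vmax = 2 * ℓ := by
    rw [hh, hV, mul_assoc, ← Real.sqrt_mul (by positivity)]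
    rw [show ℓ / Amax * (ℓ * Amax) = ℓ ^ 2 by field_simp, Real.sqrt_sq hℓ.le]
  -- helper identities
  have hch : ∀ x : ℝ, h * (x / h) = x := fun x => mul_div_cancel₀ x hh0.ne'
  have hch2 : ∀ x : ℝ, h ^ 2 / 2 * (x / h) = h / 2 * x := fun x => by
    rw [show h ^ 2 / 2 * (x / h) = h / 2 * (h * (x / h)) by ring, hch]
  have kc1 : h * (Amax / (4 * ℓ)) = Vmax / (2 * ℓ) := by
    rw [mul_div_assoc', hhA]; ring
  have kc2 : h * (Amax / (2 * ℓ)) = Vmax / ℓ := by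
    rw [mul_div_assoc', hhA]; ring
  have kc3 : h ^ 2 / 2 * (Amax / (2 * ℓ)) = 1 := by
    rw [show h ^ 2 / 2 * (Amax / (2 * ℓ)) = h ^ 2 * Amax / (4 * ℓ) by ring, hh2']
    field_simp
  have kc4 : h ^ 2 / 2 * (Amax / (4 * ℓ)) = 1 / 2 := by
    rw [show h ^ 2 / 2 * (Amax / (4 * ℓ)) = h ^ 2 * Amax / (8 * ℓ) by ring, hh2']
    field_simp; ring
  -- direction hypothesis
  simp only [add_sub_cancel_left, real_inner_smul_right,
    EuclideanSpace.inner_single_right, RCLike.star_def, conj_trivial, one_mul] at hdir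
  have hvi : 0 ≤ v i := by by_contra hc; push_neg at hc; nlinarith
  set a : EuclideanSpace ℝ (Fin d) := WithLp.toLp 2 fun j =>
    if j = i then (Vmax - v i) / h - Amax / (4 * ℓ) * (p i - ϖ i + ℓ)
    else Amax / (2 * ℓ) * (ϖ j - p j) - v j / h with ha
  have habs : ∀ x y : ℝ, |x| ≤ Amax / 2 → |y| ≤ Amax / 2 → |x - y| ≤ Amax := by
    intro x y hx hy
    calc |x - y| ≤ |x| + |y| := abs_sub _ _
    _ ≤ Amax := by linarith
  have haj : ∀ j, |a j| ≤ Amax := by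
    intro j
    by_cases hji : j = i
    · subst hji
      simp only [ha, PiLp.toLp_apply, if_pos rfl]
      apply habs
      · rw [abs_div, abs_of_pos hh0, div_le_iff₀ hh0]
        have h1 := abs_le.mp (hv j)
        rw [abs_le]; constructor <;> nlinarith
      · rw [abs_mul, abs_of_pos (show (0:ℝ) < Amax / (4 * ℓ) by positivity)]
        have h2ℓ : |p j - ϖ j + ℓ| ≤ 2 * ℓ := by
          have := abs_le.mp (hp j)
          rw [abs_le]; constructor <;> linarith
        calc Amax / (4 * ℓ) * |p j - ϖ j + ℓ| ≤ Amax / (4 * ℓ) * (2 * ℓ) := by gcongr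
          _ = Amax / 2 := by field_simp; ring
    · simp only [ha, PiLp.toLp_apply, if_neg hji]
      apply habs
      · rw [abs_mul, abs_of_pos (show (0:ℝ) < Amax / (2 * ℓ) by positivity)]
        have h2ℓ : |ϖ j - p j| ≤ ℓ := by rw [abs_sub_comm]; exact hp j
        calc Amax / (2 * ℓ) * |ϖ j - p j| ≤ Amax / (2 * ℓ) * ℓ := by gcongr
          _ = Amax / 2 := by field_simp
      · rw [abs_div, abs_of_pos hh0, div_le_iff₀ hh0]
        have h1 := abs_le.mp (hv j)
        rw [abs_le]; constructor <;> nlinarith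
  have hvel : ∀ j, |(v + h • a) j| ≤ Vmax := by
    intro j
    simp only [PiLp.add_apply, PiLp.smul_apply, smul_eq_mul]
    by_cases hji : j = i
    · subst hji
      simp only [ha, PiLp.toLp_apply, if_pos rfl, if_true]
      have heq : v j + h * ((Vmax - v j) / h - Amax / (4 * ℓ) * (p j - ϖ j + ℓ))
          = Vmax - Vmax / (2 * ℓ) * (p j - ϖ j + ℓ) := by
        linear_combination hch (Vmax - v j) - (p j - ϖ j + ℓ) * kc1
      rw [heq]
      have h3 := abs_le.mp (hp j)
      have h1 : 0 ≤ Vmax / (2 * ℓ) * (p j - ϖ j + ℓ) := by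
        apply mul_nonneg (by positivity); linarith [h3.1]
      have h2 : Vmax / (2 * ℓ) * (p j - ϖ j + ℓ) ≤ Vmax := by
        calc Vmax / (2 * ℓ) * (p j - ϖ j + ℓ) ≤ Vmax / (2 * ℓ) * (2 * ℓ) := by
              gcongr; linarith [h3.2]
          _ = Vmax := by field_simp
      rw [abs_le]; constructor <;> linarith
    · simp only [ha, PiLp.toLp_apply, if_neg hji]
      have heq : v j + h * (Amax / (2 * ℓ) * (ϖ j - p j) - v j / h)
          = Vmax / ℓ * (ϖ j - p j) := by
        linear_combination (ϖ j - p j) * kc2 - hch (v j)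
      rw [heq, abs_mul, abs_of_pos (show (0:ℝ) < Vmax / ℓ by positivity)]
      have h2ℓ : |ϖ j - p j| ≤ ℓ := by rw [abs_sub_comm]; exact hp j
      calc Vmax / ℓ * |ϖ j - p j| ≤ Vmax / ℓ * ℓ := by gcongr
        _ = Vmax := by field_simp
  refine ⟨a, haj, ?_, hvel, ?_⟩
  · intro j
    simp only [PiLp.add_apply, PiLp.smul_apply, EuclideanSpace.single_apply,
      smul_eq_mul]
    by_cases hji : j = i
    · subst hji
      simp only [ha, PiLp.toLp_apply, if_pos rfl, eq_self_iff_true, if_true, mul_one]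
      have heq : p j + h * v j + h ^ 2 / 2 *
          ((Vmax - v j) / h - Amax / (4 * ℓ) * (p j - ϖ j + ℓ)) - (ϖ j + ℓ)
          = (p j - ϖ j) / 2 + h / 2 * (v j + Vmax) - 3 * ℓ / 2 := by
        linear_combination hch2 (Vmax - v j) - (p j - ϖ j + ℓ) * kc4
      rw [heq]
      have h3 := abs_le.mp (hp j)
      have h1 : 0 ≤ h * v j := mul_nonneg hh0.le hvi
      have h2 : h * v j ≤ 2 * ℓ := by
        have := abs_le.mp (hv j)
        nlinarith
      rw [abs_le]; constructor <;> nlinarith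
    · simp only [ha, PiLp.toLp_apply, if_neg hji, mul_zero, add_zero]
      have heq : p j + h * v j + h ^ 2 / 2 *
          (Amax / (2 * ℓ) * (ϖ j - p j) - v j / h) - ϖ j = h / 2 * v j := by
        linear_combination (ϖ j - p j) * kc3 - hch2 (v j)
      rw [heq, abs_mul, abs_of_pos (show (0:ℝ) < h / 2 by positivity)]
      calc h / 2 * |v j| ≤ h / 2 * Vmax := by gcongr; exact hv j
        _ = ℓ := by linarith
  · simp only [add_sub_cancel_left, real_inner_smul_right,
      EuclideanSpace.inner_single_right, RCLike.star_def, conj_trivial, one_mul]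
    have h1 : 0 ≤ (v + h • a) i := by
      simp only [PiLp.add_apply, PiLp.smul_apply, smul_eq_mul, ha, PiLp.toLp_apply, eq_self_iff_true, if_true]
      have heq : v i + h * ((Vmax - v i) / h - Amax / (4 * ℓ) * (p i - ϖ i + ℓ))
          = Vmax - Vmax / (2 * ℓ) * (p i - ϖ i + ℓ) := by
        linear_combination hch (Vmax - v i) - (p i - ϖ i + ℓ) * kc1
      rw [heq]
      have h3 := abs_le.mp (hp i)
      have h2 : Vmax / (2 * ℓ) * (p i - ϖ i + ℓ) ≤ Vmax := by
        calc Vmax / (2 * ℓ) * (p i - ϖ i + ℓ) ≤ Vmax / (2 * ℓ) * (2 * ℓ) := by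
              gcongr; linarith [h3.2]
          _ = Vmax := by field_simp
      linarith
    exact mul_nonneg hℓ.le h1
end

section
/- (Two-step corner maneuver, scalar version from the proof of Lemma 2.) Let ℓ > 0, A_max > 0, V_max = √(ℓ·A_max), h = 2·√(ℓ/A_max), and let α ≥ 1. Suppose p ∈ [−α·ℓ, α·ℓ], v ∈ [−α·V_max, α·V_max], and let V_f ∈ [0, V_max/α] be any desired final speed. Then there exist constant accelerations a₁ and a₂ with |a₁| ≤ α·A_max and |a₂| ≤ α·A_max such that, setting p₁ = p + h·v + (h²/2)·a₁, v₁ = v + h·a₁, p₂ = p₁ + h·v₁ + (h²/2)·a₂ and v₂ = v₁ + h·a₂, one has p₁ ∈ [−α·ℓ, α·ℓ], v₁ ∈ [−α·V_max, α·V_max], p₂ ∈ [0, ℓ], and v₂ = α·V_f. -/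
set_option maxHeartbeats 1000000 in
/-- two-step corner maneuver, scalar version (proof of Lemma 2). -/
theorem stmt_3 (ℓ Amax Vmax h : ℝ) (hℓ : 0 < ℓ) (hA : 0 < Amax)
    (hV : Vmax = Real.sqrt (ℓ * Amax)) (hh : h = 2 * Real.sqrt (ℓ / Amax))
    (α : ℝ) (hα : 1 ≤ α)
    (p v Vf : ℝ)
    (hp : p ∈ Set.Icc (-(α * ℓ)) (α * ℓ))
    (hv : v ∈ Set.Icc (-(α * Vmax)) (α * Vmax))
    (hVf : Vf ∈ Set.Icc (0 : ℝ) (Vmax / α)) :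
    ∃ a₁ a₂ : ℝ, |a₁| ≤ α * Amax ∧ |a₂| ≤ α * Amax ∧
      p + h * v + h ^ 2 / 2 * a₁ ∈ Set.Icc (-(α * ℓ)) (α * ℓ) ∧
      v + h * a₁ ∈ Set.Icc (-(α * Vmax)) (α * Vmax) ∧
      (p + h * v + h ^ 2 / 2 * a₁) + h * (v + h * a₁) + h ^ 2 / 2 * a₂ ∈
        Set.Icc (0 : ℝ) ℓ ∧
      (v + h * a₁) + h * a₂ = α * Vf := by
  have hh0 : 0 < h := by
    rw [hh]; positivity
  have hVm : 0 < Vmax := by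
    rw [hV]; positivity
  have key1 : h * Vmax = 2 * ℓ := by
    have h2 : Real.sqrt (ℓ / Amax) * Real.sqrt (ℓ * Amax) = ℓ := by
      rw [← Real.sqrt_mul (by positivity),
        show ℓ / Amax * (ℓ * Amax) = ℓ ^ 2 by field_simp, Real.sqrt_sq hℓ.le]
    rw [hh, hV]; nlinarith [h2]
  have key2 : h * Amax = 2 * Vmax := by
    have h1 : (Real.sqrt (ℓ / Amax) * Amax) ^ 2 = ℓ * Amax := by
      rw [mul_pow, Real.sq_sqrt (by positivity)]; field_simp
    have h2 : Real.sqrt (ℓ / Amax) * Amax = Real.sqrt (ℓ * Amax) := by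
      rw [← h1, Real.sqrt_sq (by positivity)]
    rw [hh, hV]; nlinarith [h2]
  obtain ⟨hp1, hp2⟩ := hp
  obtain ⟨hv1, hv2⟩ := hv
  obtain ⟨hVf1, hVf2⟩ := hVf
  clear hV hh
  have hα0 : (0 : ℝ) < α := lt_of_lt_of_le one_pos hα
  have key1α : h * (α * Vmax) = 2 * (α * ℓ) := by
    rw [show h * (α * Vmax) = α * (h * Vmax) by ring, key1]; ring
  have key2α : h * (α * Amax) = 2 * (α * Vmax) := by
    rw [show h * (α * Amax) = α * (h * Amax) by ring, key2]; ring
  have hαVf : α * Vf ≤ Vmax := by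
    have := (le_div_iff₀ hα0).mp hVf2
    nlinarith
  have hαVf0 : 0 ≤ α * Vf := mul_nonneg hα0.le hVf1
  have hVmα : Vmax ≤ α * Vmax := by nlinarith
  have haVfh : h * (α * Vf) ≤ 2 * ℓ := by
    have := mul_le_mul_of_nonneg_left hαVf hh0.le
    linarith [key1]
  have haVfh0 : 0 ≤ h * (α * Vf) := mul_nonneg hh0.le hαVf0
  -- bounds on h*v
  have hhv1 : -(2 * (α * ℓ)) ≤ h * v := by
    have := mul_le_mul_of_nonneg_left hv1 hh0.le
    linarith [key1α]
  have hhv2 : h * v ≤ 2 * (α * ℓ) := by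
    have := mul_le_mul_of_nonneg_left hv2 hh0.le
    linarith [key1α]
  set vstar := (ℓ / 2 - p) / h - v / 2 - α * Vf / 2 with hvstar
  set U2 := (2 * (α * ℓ - p) - h * v) / h with hU2def
  set L2 := (2 * (-(α * ℓ) - p) - h * v) / h with hL2def
  set U := min (α * Vmax) U2 with hUdef
  set L := max (-(α * Vmax)) L2 with hLdef
  have hU2v : h * U2 = 2 * (α * ℓ - p) - h * v := by
    rw [hU2def]; field_simp
  have hL2v : h * L2 = 2 * (-(α * ℓ) - p) - h * v := by
    rw [hL2def]; field_simp
  have hvsv : h * vstar = ℓ / 2 - p - h * v / 2 - h * (α * Vf) / 2 := by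
    rw [hvstar]; field_simp
  have hLU : L ≤ U := by
    rw [hLdef, hUdef]
    apply max_le <;> apply le_min
    · linarith
    · rw [hU2def, le_div_iff₀ hh0]
      linarith [key1α]
    · rw [hL2def, div_le_iff₀ hh0]
      linarith [key1α]
    · rw [hL2def, hU2def]
      gcongr
      linarith
  set v₁ := max L (min U vstar) with hv₁def
  have hv₁U : v₁ ≤ U := by
    rw [hv₁def]; exact max_le hLU (min_le_left _ _)
  have hv₁L : L ≤ v₁ := le_max_left _ _
  have hv₁ub : v₁ ≤ α * Vmax := le_trans hv₁U (by rw [hUdef]; exact min_le_left _ _)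
  have hv₁lb : -(α * Vmax) ≤ v₁ := le_trans (by rw [hLdef]; exact le_max_left _ _) hv₁L
  have hv₁U2 : h * v₁ ≤ 2 * (α * ℓ - p) - h * v := by
    have h1 : v₁ ≤ U2 := le_trans hv₁U (by rw [hUdef]; exact min_le_right _ _)
    have := mul_le_mul_of_nonneg_left h1 hh0.le
    linarith [hU2v]
  have hv₁L2 : 2 * (-(α * ℓ) - p) - h * v ≤ h * v₁ := by
    have h1 : L2 ≤ v₁ := le_trans (by rw [hLdef]; exact le_max_right _ _) hv₁L
    have := mul_le_mul_of_nonneg_left h1 hh0.le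
    linarith [hL2v]
  have hhv₁ub : h * v₁ ≤ 2 * (α * ℓ) := by
    have := mul_le_mul_of_nonneg_left hv₁ub hh0.le
    linarith [key1α]
  have hhv₁lb : -(2 * (α * ℓ)) ≤ h * v₁ := by
    have := mul_le_mul_of_nonneg_left hv₁lb hh0.le
    linarith [key1α]
  clear_value v₁ U L vstar U2 L2
  refine ⟨(v₁ - v) / h, (α * Vf - v₁) / h, ?_, ?_, ?_, ?_, ?_, ?_⟩
  · rw [abs_div, abs_of_pos hh0, div_le_iff₀ hh0, abs_le]
    constructor <;> nlinarith [key2α]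
  · rw [abs_div, abs_of_pos hh0, div_le_iff₀ hh0, abs_le]
    constructor <;> nlinarith [key2α]
  · have e : p + h * v + h ^ 2 / 2 * ((v₁ - v) / h) = p + h * v / 2 + h * v₁ / 2 := by
      field_simp; ring
    rw [e]
    exact ⟨by linarith [hv₁L2], by linarith [hv₁U2]⟩
  · have e : v + h * ((v₁ - v) / h) = v₁ := by field_simp; ring
    rw [e]; exact ⟨hv₁lb, hv₁ub⟩
  · have e : (p + h * v + h ^ 2 / 2 * ((v₁ - v) / h)) + h * (v + h * ((v₁ - v) / h))
        + h ^ 2 / 2 * ((α * Vf - v₁) / h) = p + h * v / 2 + h * v₁ + h * (α * Vf) / 2 := by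
      field_simp; ring
    rw [e]
    rcases le_total vstar L with hc | hc
    · -- clamped at L
      have hveq : v₁ = L := by
        rw [hv₁def]
        exact max_eq_left (le_trans (min_le_right _ _) hc)
      have hge : h * vstar ≤ h * v₁ := by
        have h1 : vstar ≤ v₁ := hveq ▸ hc
        exact mul_le_mul_of_nonneg_left h1 hh0.le
      constructor
      · linarith [hvsv]
      · rcases le_total L2 (-(α * Vmax)) with hd | hd
        · have e2 : h * v₁ = -(2 * (α * ℓ)) := by
            rw [hveq, hLdef, max_eq_left hd]; linarith [key1α]
          linarith
        · have e2 : h * v₁ = 2 * (-(α * ℓ) - p) - h * v := by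
            rw [hveq, hLdef, max_eq_right hd]; exact hL2v
          linarith
    · rcases le_total vstar U with hd | hd
      · have hveq : v₁ = vstar := by
          rw [hv₁def, min_eq_right hd]; exact max_eq_right hc
        have e2 : h * v₁ = ℓ / 2 - p - h * v / 2 - h * (α * Vf) / 2 := by
          rw [hveq]; exact hvsv
        constructor <;> linarith
      · have hveq : v₁ = U := by
          rw [hv₁def, min_eq_left hd]; exact max_eq_right hLU
        have hle : h * v₁ ≤ h * vstar := by
          have h1 : v₁ ≤ vstar := hveq ▸ hd
          exact mul_le_mul_of_nonneg_left h1 hh0.le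
        constructor
        · rcases le_total (α * Vmax) U2 with he | he
          · have e2 : h * v₁ = 2 * (α * ℓ) := by
              rw [hveq, hUdef, min_eq_left he]; linarith [key1α]
            linarith
          · have e2 : h * v₁ = 2 * (α * ℓ - p) - h * v := by
              rw [hveq, hUdef, min_eq_right he]; exact hU2v
            linarith
        · linarith [hvsv]
  · field_simp; ring
end

section
/- (Lemma 2, axis-aligned form.) Let ℓ > 0, A_max > 0, V_max = √(ℓ·A_max), h = 2·√(ℓ/A_max). Let ϖ ∈ ℝ^d, let j be a coordinate index, and consider the repeated waypoint pair ϖ[k] = ϖ[k+1] = ϖ followed by ϖ[k+2] = ϖ + ℓ·e_j. Suppose p ∈ Ω(ϖ) and ‖v‖_∞ ≤ V_max. Then there exist accelerations a₁ and a₂ with ‖a₁‖_∞ ≤ A_max and ‖a₂‖_∞ ≤ A_max such that, setting p₁ = p + h·v + (h²/2)·a₁, v₁ = v + h·a₁, p₂ = p₁ + h·v₁ + (h²/2)·a₂ and v₂ = v₁ + h·a₂, one has p₁ ∈ Ω(ϖ), ‖v₁‖_∞ ≤ V_max, p₂ ∈ Ω(ϖ + ℓ·e_j), ‖v₂‖_∞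 ≤ V_max, and ⟨v₂, (ϖ + ℓ·e_j) − ϖ⟩ ≥ 0. -/
open scoped RealInnerProductSpace

/-- Step-2 helper for the coordinate `j`: from midpoint value `s ∈ [0, 2ℓ]`
we can pick a nonnegative final velocity `w₂` landing in `[0, 2ℓ]` exactly. -/
lemma stmt4_step2 (ℓ V h s : ℝ) (hℓ : 0 < ℓ) (hV0 : 0 < V) (hh0 : 0 < h)
    (khv : h * V = 2 * ℓ) (hs0 : 0 ≤ s) (hs2 : s ≤ 2 * ℓ) :
    ∃ w₂ : ℝ, |w₂| ≤ V ∧ 0 ≤ w₂ ∧ |s + h / 2 * w₂ - ℓ| ≤ ℓ := by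
  have hN0 : ℓ * (V / ℓ * (2 * ℓ - s)) = V * (2 * ℓ - s) := by field_simp
  have hN : h * (V / ℓ * (2 * ℓ - s)) = 2 * (2 * ℓ - s) :=
    mul_left_cancel₀ hℓ.ne' (by linear_combination h * hN0 + (2 * ℓ - s) * khv)
  rcases le_total V (V / ℓ * (2 * ℓ - s)) with hc | hc
  · have hm := mul_le_mul_of_nonneg_left hc hh0.le
    refine ⟨V, by rw [abs_le]; constructor <;> linarith, hV0.le, ?_⟩
    rw [abs_le]; constructor <;> linarith
  · have hNl : 0 ≤ V / ℓ * (2 * ℓ - s) := by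
      have h1 : ℓ * 0 ≤ ℓ * (V / ℓ * (2 * ℓ - s)) := by
        nlinarith [mul_nonneg hV0.le (by linarith : (0:ℝ) ≤ 2 * ℓ - s)]
      exact le_of_mul_le_mul_left h1 hℓ
    refine ⟨V / ℓ * (2 * ℓ - s), by rw [abs_le]; exact ⟨by linarith, hc⟩, hNl, ?_⟩
    rw [abs_le]; constructor <;> linarith

/-- Step-2 helper for coordinates `i ≠ j`: stay in `[-ℓ, ℓ]`. -/
lemma stmt4_step2' (ℓ V h x1 w1 : ℝ) (hℓ : 0 < ℓ) (hV0 : 0 < V) (hh0 : 0 < h)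
    (khv : h * V = 2 * ℓ) (hx1 : |x1| ≤ ℓ) (hw1 : |w1| ≤ V) :
    ∃ w₂ : ℝ, |w₂| ≤ V ∧ |x1 + h / 2 * (w1 + w₂)| ≤ ℓ := by
  obtain ⟨ha1, ha2⟩ := abs_le.mp hx1
  obtain ⟨hb1, hb2⟩ := abs_le.mp hw1
  have hbw1u : h * w1 ≤ 2 * ℓ := by nlinarith [mul_le_mul_of_nonneg_left hb2 hh0.le]
  have hbw1l : -(2 * ℓ) ≤ h * w1 := by nlinarith [mul_le_mul_of_nonneg_left hb1 hh0.le]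
  have hc0 : ℓ * (-w1 - V / ℓ * x1) = -(ℓ * w1) - V * x1 := by field_simp; try ring
  have hcc : h * (-w1 - V / ℓ * x1) = -(h * w1) - 2 * x1 :=
    mul_left_cancel₀ hℓ.ne' (by linear_combination h * hc0 - x1 * khv)
  rcases le_total V (-w1 - V / ℓ * x1) with h1 | h1
  · have hm := mul_le_mul_of_nonneg_left h1 hh0.le
    refine ⟨V, by rw [abs_le]; constructor <;> linarith, ?_⟩
    rw [abs_le]; constructor <;> linarith
  · rcases le_total (-w1 - V / ℓ * x1) (-V) with h2 | h2
    · have hm := mul_le_mul_of_nonneg_left h2 hh0.le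
      refine ⟨-V, by rw [abs_le]; constructor <;> linarith, ?_⟩
      rw [abs_le]; constructor <;> nlinarith
    · refine ⟨-w1 - V / ℓ * x1, by rw [abs_le]; exact ⟨h2, h1⟩, ?_⟩
      rw [abs_le]; constructor <;> linarith

/-- Step-1 helper for the coordinate `j`: reach a state with `x₁ ∈ [-ℓ,ℓ]`
and `x₁ + (h/2)w₁ ≥ 0`. -/
lemma stmt4_step1 (ℓ V h x u : ℝ) (hℓ : 0 < ℓ) (hV0 : 0 < V) (hh0 : 0 < h)
    (khv : h * V = 2 * ℓ) (hx : |x| ≤ ℓ) (hu : |u| ≤ V) :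
    ∃ w₁ : ℝ, |w₁ - u| ≤ 2 * V ∧ |w₁| ≤ V ∧ |x + h / 2 * (u + w₁)| ≤ ℓ ∧
      0 ≤ x + h / 2 * (u + w₁) + h / 2 * w₁ := by
  obtain ⟨ha1, ha2⟩ := abs_le.mp hx
  obtain ⟨hb1, hb2⟩ := abs_le.mp hu
  have hbuu : h * u ≤ 2 * ℓ := by nlinarith [mul_le_mul_of_nonneg_left hb2 hh0.le]
  have hbul : -(2 * ℓ) ≤ h * u := by nlinarith [mul_le_mul_of_nonneg_left hb1 hh0.le]
  have hM0 : ℓ * (V / ℓ * (ℓ - x) - u) = V * (ℓ - x) - ℓ * u := by field_simp; try ring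
  have hM : h * (V / ℓ * (ℓ - x) - u) = 2 * ℓ - 2 * x - h * u :=
    mul_left_cancel₀ hℓ.ne' (by linear_combination h * hM0 + (ℓ - x) * khv)
  rcases le_total V (V / ℓ * (ℓ - x) - u) with hc | hc
  · have hm := mul_le_mul_of_nonneg_left hc hh0.le
    refine ⟨V, by rw [abs_le]; constructor <;> linarith, by rw [abs_le]; constructor <;> linarith,
      ?_, ?_⟩
    · rw [abs_le]; constructor <;> linarith
    · linarith
  · have hMlb : -V ≤ V / ℓ * (ℓ - x) - u := by
      have h1 : ℓ * (-V) ≤ ℓ * (V / ℓ * (ℓ - x) - u) := by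
        nlinarith [mul_nonneg hV0.le (by linarith : (0:ℝ) ≤ ℓ - x),
          mul_le_mul_of_nonneg_left hb2 hℓ.le]
      exact le_of_mul_le_mul_left h1 hℓ
    have hbM : h * (V / ℓ * (ℓ - x) - u) ≤ h * V := mul_le_mul_of_nonneg_left hc hh0.le
    have hbMl : h * (-V) ≤ h * (V / ℓ * (ℓ - x) - u) := mul_le_mul_of_nonneg_left hMlb hh0.le
    refine ⟨V / ℓ * (ℓ - x) - u, by rw [abs_le]; constructor <;> linarith,
      by rw [abs_le]; exact ⟨hMlb, hc⟩, ?_, ?_⟩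
    · rw [abs_le]; constructor <;> nlinarith
    · nlinarith


/-- Lemma 2, axis-aligned form (repeated waypoint followed by a
step of length ℓ along the coordinate direction e_j). -/
theorem stmt_4 (d : ℕ) (hd : 1 ≤ d) (ℓ Amax Vmax h : ℝ) (hℓ : 0 < ℓ) (hA : 0 < Amax)
    (hV : Vmax = Real.sqrt (ℓ * Amax)) (hh : h = 2 * Real.sqrt (ℓ / Amax))
    (ϖ p v : EuclideanSpace ℝ (Fin d)) (j : Fin d)
    (hp : ∀ i, |p i - ϖ i| ≤ ℓ)
    (hv : ∀ i, |v i| ≤ Vmax) :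
    ∃ a₁ a₂ : EuclideanSpace ℝ (Fin d),
      (∀ i, |a₁ i| ≤ Amax) ∧ (∀ i, |a₂ i| ≤ Amax) ∧
      (∀ i, |(p + h • v + (h ^ 2 / 2) • a₁) i - ϖ i| ≤ ℓ) ∧
      (∀ i, |(v + h • a₁) i| ≤ Vmax) ∧
      (∀ i, |((p + h • v + (h ^ 2 / 2) • a₁) + h • (v + h • a₁) + (h ^ 2 / 2) • a₂) i -
              (ϖ + ℓ • EuclideanSpace.single j (1 : ℝ)) i| ≤ ℓ) ∧
      (∀ i, |((v + h • a₁) + h • a₂) i| ≤ Vmax) ∧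
      0 ≤ ⟪(v + h • a₁) + h • a₂,
            (ϖ + ℓ • EuclideanSpace.single j (1 : ℝ)) - ϖ⟫ := by
  have hV0 : 0 < Vmax := by rw [hV]; positivity
  have hh0 : 0 < h := by rw [hh]; positivity
  have khv : h * Vmax = 2 * ℓ := by
    have e1 : ℓ / Amax * (ℓ * Amax) = ℓ ^ 2 := by field_simp; try ring
    rw [hh, hV, mul_assoc, ← Real.sqrt_mul (by positivity), e1, Real.sqrt_sq hℓ.le]
  have kha : h * Amax = 2 * Vmax := by
    have e1 : ℓ * Amax = ℓ / Amax * Amax ^ 2 := by field_simp; try ring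
    rw [hh, hV, e1, Real.sqrt_mul (by positivity), Real.sqrt_sq hA.le]; ring
  have key : ∀ i : Fin d, ∃ w₁ w₂ : ℝ,
      |w₁ - v i| ≤ 2 * Vmax ∧ |w₂ - w₁| ≤ 2 * Vmax ∧ |w₁| ≤ Vmax ∧ |w₂| ≤ Vmax ∧
      (i = j → 0 ≤ w₂) ∧
      |(p i - ϖ i) + h / 2 * (v i + w₁)| ≤ ℓ ∧
      |(p i - ϖ i) + h / 2 * (v i + w₁) + h / 2 * (w₁ + w₂) -
        (if i = j then ℓ else 0)| ≤ ℓ := by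
    intro i
    by_cases hij : i = j
    · obtain ⟨w₁, hw11, hw12, hw13, hw14⟩ :=
        stmt4_step1 ℓ Vmax h (p i - ϖ i) (v i) hℓ hV0 hh0 khv (hp i) (hv i)
      obtain ⟨hb1, hb2⟩ := abs_le.mp hw12
      have hbw1u : h * w₁ ≤ 2 * ℓ := by nlinarith [mul_le_mul_of_nonneg_left hb2 hh0.le]
      obtain ⟨hx11, hx12⟩ := abs_le.mp hw13
      obtain ⟨w₂, hw21, hw22, hw23⟩ :=
        stmt4_step2 ℓ Vmax h ((p i - ϖ i) + h / 2 * (v i + w₁) + h / 2 * w₁) hℓ hV0 hh0 khv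
          hw14 (by linarith)
      obtain ⟨hc1, hc2⟩ := abs_le.mp hw21
      refine ⟨w₁, w₂, hw11, by rw [abs_le]; constructor <;> linarith, hw12, hw21,
        fun _ => hw22, hw13, ?_⟩
      rw [if_pos hij]
      have e : (p i - ϖ i) + h / 2 * (v i + w₁) + h / 2 * (w₁ + w₂) - ℓ =
          ((p i - ϖ i) + h / 2 * (v i + w₁) + h / 2 * w₁) + h / 2 * w₂ - ℓ := by ring
      rw [e]; exact hw23
    · obtain ⟨w₂, hw21, hw23⟩ :=
        stmt4_step2' ℓ Vmax h (p i - ϖ i) (-(v i)) hℓ hV0 hh0 khv (hp i)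
          (by rw [abs_neg]; exact hv i)
      obtain ⟨hb1, hb2⟩ := abs_le.mp (hv i)
      obtain ⟨hc1, hc2⟩ := abs_le.mp hw21
      refine ⟨-(v i), w₂, by rw [abs_le]; constructor <;> linarith,
        by rw [abs_le]; constructor <;> linarith,
        by rw [abs_neg]; exact hv i, hw21, fun hij' => absurd hij' hij, ?_, ?_⟩
      · have e : (p i - ϖ i) + h / 2 * (v i + -(v i)) = p i - ϖ i := by ring
        rw [e]; exact hp i
      · rw [if_neg hij]
        have e : (p i - ϖ i) + h / 2 * (v i + -(v i)) + h / 2 * (-(v i) + w₂) - 0 =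
            (p i - ϖ i) + h / 2 * (-(v i) + w₂) := by ring
        rw [e]; exact hw23
  choose w1 w2 hw using key
  refine ⟨(WithLp.toLp 2 (fun i => (w1 i - v i) / h) : EuclideanSpace ℝ (Fin d)),
    (WithLp.toLp 2 (fun i => (w2 i - w1 i) / h) : EuclideanSpace ℝ (Fin d)), ?_, ?_, ?_, ?_, ?_, ?_, ?_⟩
  · intro i
    show |(w1 i - v i) / h| ≤ Amax
    rw [abs_div, abs_of_pos hh0, div_le_iff₀ hh0]
    have := (hw i).1
    nlinarith [kha]
  · intro i
    show |(w2 i - w1 i) / h| ≤ Amax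
    rw [abs_div, abs_of_pos hh0, div_le_iff₀ hh0]
    have := (hw i).2.1
    nlinarith [kha]
  · intro i
    simp only [PiLp.add_apply, PiLp.smul_apply, smul_eq_mul, PiLp.toLp_apply]
    have d1 : h ^ 2 / 2 * ((w1 i - v i) / h) = h / 2 * (w1 i - v i) := by
      field_simp
    have h6 := (hw i).2.2.2.2.2.1
    rw [abs_le] at h6 ⊢
    constructor <;> linarith [h6.1, h6.2]
  · intro i
    simp only [PiLp.add_apply, PiLp.smul_apply, smul_eq_mul, PiLp.toLp_apply]
    have d2 : h * ((w1 i - v i) / h) = w1 i - v i := by field_simp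
    have h3 := (hw i).2.2.1
    rw [abs_le] at h3 ⊢
    constructor <;> linarith [h3.1, h3.2]
  · intro i
    simp only [PiLp.add_apply, PiLp.smul_apply, smul_eq_mul, EuclideanSpace.single_apply, PiLp.toLp_apply]
    have d1 : h ^ 2 / 2 * ((w1 i - v i) / h) = h / 2 * (w1 i - v i) := by
      field_simp
    have d2 : h * ((w1 i - v i) / h) = w1 i - v i := by field_simp
    have d3 : h ^ 2 / 2 * ((w2 i - w1 i) / h) = h / 2 * (w2 i - w1 i) := by
      field_simp
    have h7 := (hw i).2.2.2.2.2.2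
    by_cases hij : i = j
    · rw [if_pos hij] at h7
      rw [if_pos hij]
      rw [abs_le] at h7 ⊢
      constructor <;> linarith [h7.1, h7.2]
    · rw [if_neg hij] at h7
      rw [if_neg hij]
      rw [abs_le] at h7 ⊢
      constructor <;> linarith [h7.1, h7.2]
  · intro i
    simp only [PiLp.add_apply, PiLp.smul_apply, smul_eq_mul, PiLp.toLp_apply]
    have d2 : h * ((w1 i - v i) / h) = w1 i - v i := by field_simp
    have d4 : h * ((w2 i - w1 i) / h) = w2 i - w1 i := by field_simp
    have h4 := (hw i).2.2.2.1
    rw [abs_le] at h4 ⊢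
    constructor <;> linarith [h4.1, h4.2]
  · have e : (ϖ + ℓ • EuclideanSpace.single j (1 : ℝ)) - ϖ =
        ℓ • EuclideanSpace.single j (1 : ℝ) := by abel
    rw [e, real_inner_smul_right, EuclideanSpace.inner_single_right]
    simp only [PiLp.add_apply, PiLp.smul_apply, smul_eq_mul, PiLp.toLp_apply, starRingEnd_apply,
      star_trivial, one_mul]
    have e2 : v j + h * ((w1 j - v j) / h) + h * ((w2 j - w1 j) / h) = w2 j := by
      field_simp; ring
    rw [e2]
    exact mul_nonneg hℓ.le ((hw j).2.2.2.2.1 rfl)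
end

section
/- (Lemma 3, scalar version.) Let ℓ > 0, A_max > 0, V_max = √(ℓ·A_max), h = 2·√(ℓ/A_max). Suppose p₀, v₀, a are real numbers with |p₀| ≤ ℓ, |v₀| ≤ V_max, |a| ≤ A_max, and suppose the state after one step satisfies |p₀ + h·v₀ + (h²/2)·a| ≤ ℓ and |v₀ + h·a| ≤ V_max. Then for every t ∈ [0, h], the continuous position satisfies |p₀ + t·v₀ + (t²/2)·a| ≤ (3/2)·ℓ. -/
/-- Lemma 3, scalar version. -/
theorem stmt_6 (ℓ Amax Vmax h : ℝ) (hℓ : 0 < ℓ) (hA : 0 < Amax)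
    (hV : Vmax = Real.sqrt (ℓ * Amax)) (hh : h = 2 * Real.sqrt (ℓ / Amax))
    (p₀ v₀ a : ℝ)
    (hp : |p₀| ≤ ℓ) (hv : |v₀| ≤ Vmax) (ha : |a| ≤ Amax)
    (hp1 : |p₀ + h * v₀ + h ^ 2 / 2 * a| ≤ ℓ)
    (hv1 : |v₀ + h * a| ≤ Vmax)
    (t : ℝ) (ht : t ∈ Set.Icc 0 h) :
    |p₀ + t * v₀ + t ^ 2 / 2 * a| ≤ 3 / 2 * ℓ := by
  obtain ⟨ht0, hth⟩ := ht
  have hquot : 0 < ℓ / Amax := div_pos hℓ hA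
  have hh2 : h ^ 2 = 4 * (ℓ / Amax) := by
    rw [hh]; rw [mul_pow, Real.sq_sqrt hquot.le]; ring
  have hhpos : 0 < h := by
    rw [hh]; positivity
  have key : p₀ + t * v₀ + t ^ 2 / 2 * a =
      (1 - t / h) * p₀ + (t / h) * (p₀ + h * v₀ + h ^ 2 / 2 * a)
        + (t * (t - h) / 2) * a := by
    field_simp
    ring
  rw [key]
  have h1 : |(1 - t / h) * p₀| ≤ (1 - t / h) * ℓ := by
    rw [abs_mul]
    have : |1 - t / h| = 1 - t / h := abs_of_nonneg (by
      have : t / h ≤ 1 := (div_le_one hhpos).2 hth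
      linarith)
    rw [this]
    exact mul_le_mul_of_nonneg_left hp (by
      have : t / h ≤ 1 := (div_le_one hhpos).2 hth
      linarith)
  have h2 : |(t / h) * (p₀ + h * v₀ + h ^ 2 / 2 * a)| ≤ (t / h) * ℓ := by
    rw [abs_mul, abs_of_nonneg (div_nonneg ht0 hhpos.le)]
    exact mul_le_mul_of_nonneg_left hp1 (div_nonneg ht0 hhpos.le)
  have h3 : |(t * (t - h) / 2) * a| ≤ ℓ / 2 := by
    rw [abs_mul]
    have habs : |t * (t - h) / 2| ≤ h ^ 2 / 8 := by
      rw [abs_div, abs_mul]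
      have : |t| * |t - h| ≤ h ^ 2 / 4 := by
        rw [abs_of_nonneg ht0, abs_of_nonpos (by linarith)]
        nlinarith [sq_nonneg (t - h / 2)]
      rw [abs_of_pos (by norm_num : (0:ℝ) < 2)]
      linarith
    calc |t * (t - h) / 2| * |a| ≤ h ^ 2 / 8 * Amax := by
          exact mul_le_mul habs ha (abs_nonneg _) (by positivity)
      _ = ℓ / 2 := by rw [hh2]; field_simp; ring
  calc |(1 - t / h) * p₀ + (t / h) * (p₀ + h * v₀ + h ^ 2 / 2 * a)
        + (t * (t - h) / 2) * a|
      ≤ |(1 - t / h) * p₀| + |(t / h) * (p₀ + h * v₀ + h ^ 2 / 2 * a)|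
        + |(t * (t - h) / 2) * a| := by
        exact (abs_add_le _ _).trans (by gcongr; exact abs_add_le _ _)
    _ ≤ (1 - t / h) * ℓ + (t / h) * ℓ + ℓ / 2 := by gcongr
    _ = 3 / 2 * ℓ := by ring
end

section
/- (Lemma 3, axis-aligned vector version.) Let ℓ > 0, A_max > 0, V_max = √(ℓ·A_max), h = 2·√(ℓ/A_max). Let ϖ ∈ ℝ^d, let i be a coordinate index, and set ϖ' = ϖ + ℓ·e_i. Suppose p₀ ∈ Ω(ϖ), ‖v₀‖_∞ ≤ V_max, ‖a‖_∞ ≤ A_max, and the state after one step satisfies p₀ + h·v₀ + (h²/2)·a ∈ Ω(ϖ') and ‖v₀ + h·a‖_∞ ≤ V_max. Then for every t ∈ [0, h] there is a point q on the closed segment joining ϖ and ϖ' such that ‖(p₀ + t·v₀ + (t²/2)·a) − q‖₂ ≤ (3/2)·ℓ·√d; that is, the Euclidean distance from the continuous trajectory to the segment [ϖ, ϖ'] never exceeds (3/2)·ℓ·√d. -/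
set_option maxHeartbeats 1000000 in
/-- Lemma 3, axis-aligned vector version: the continuous
trajectory stays within Euclidean distance (3/2)·ℓ·√d of the segment
joining consecutive waypoints. -/
theorem stmt_7 (d : ℕ) (hd : 1 ≤ d) (ℓ Amax Vmax h : ℝ) (hℓ : 0 < ℓ) (hA : 0 < Amax)
    (hV : Vmax = Real.sqrt (ℓ * Amax)) (hh : h = 2 * Real.sqrt (ℓ / Amax))
    (ϖ p₀ v₀ a : EuclideanSpace ℝ (Fin d)) (i : Fin d)
    (hp : ∀ j, |p₀ j - ϖ j| ≤ ℓ)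
    (hv : ∀ j, |v₀ j| ≤ Vmax)
    (ha : ∀ j, |a j| ≤ Amax)
    (hp1 : ∀ j, |(p₀ + h • v₀ + (h ^ 2 / 2) • a) j -
                  (ϖ + ℓ • EuclideanSpace.single i (1 : ℝ)) j| ≤ ℓ)
    (hv1 : ∀ j, |(v₀ + h • a) j| ≤ Vmax)
    (t : ℝ) (ht : t ∈ Set.Icc 0 h) :
    ∃ q ∈ segment ℝ ϖ (ϖ + ℓ • EuclideanSpace.single i (1 : ℝ)),
      ‖(p₀ + t • v₀ + (t ^ 2 / 2) • a) - q‖ ≤ 3 / 2 * ℓ * Real.sqrt d := by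
  have hℓA : 0 < ℓ / Amax := div_pos hℓ hA
  have hhpos : 0 < h := by
    rw [hh]; positivity
  have hsq : h ^ 2 = 4 * (ℓ / Amax) := by
    rw [hh, mul_pow, Real.sq_sqrt hℓA.le]; ring
  set s : ℝ := t / h with hs_def
  have hs0 : 0 ≤ s := div_nonneg ht.1 hhpos.le
  have hs1 : s ≤ 1 := (div_le_one hhpos).mpr ht.2
  have hts : s * h = t := div_mul_cancel₀ t hhpos.ne'
  refine ⟨(1 - s) • ϖ + s • (ϖ + ℓ • EuclideanSpace.single i (1 : ℝ)),
    ⟨1 - s, s, by linarith, hs0, by ring, rfl⟩, ?_⟩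
  -- coordinatewise bound
  have key : ∀ j, |((p₀ + t • v₀ + (t ^ 2 / 2) • a) -
      ((1 - s) • ϖ + s • (ϖ + ℓ • EuclideanSpace.single i (1 : ℝ)))) j| ≤ 3 / 2 * ℓ := by
    intro j
    have habs : |t ^ 2 - t * h| ≤ h ^ 2 / 4 := by
      rw [abs_le]
      constructor
      · nlinarith [sq_nonneg (t - h / 2)]
      · nlinarith [mul_nonneg ht.1 (sub_nonneg.mpr ht.2), sq_nonneg h]
    have hprod : |a j * (t ^ 2 - t * h)| ≤ ℓ := by
      rw [abs_mul]
      calc |a j| * |t ^ 2 - t * h| ≤ Amax * (h ^ 2 / 4) :=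
            mul_le_mul (ha j) habs (abs_nonneg _) hA.le
        _ = ℓ := by rw [hsq]; field_simp
    have main : ∀ δ : ℝ, |p₀ j + h * v₀ j + h ^ 2 / 2 * a j - (ϖ j + δ)| ≤ ℓ →
        |p₀ j + t * v₀ j + t ^ 2 / 2 * a j - ((1 - s) * ϖ j + s * (ϖ j + δ))| ≤ 3 / 2 * ℓ := by
      intro δ h3
      have hE : p₀ j + t * v₀ j + t ^ 2 / 2 * a j - ((1 - s) * ϖ j + s * (ϖ j + δ)) =
          (1 - s) * (p₀ j - ϖ j) +
          s * (p₀ j + h * v₀ j + h ^ 2 / 2 * a j - (ϖ j + δ)) +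
          a j * (t ^ 2 - t * h) / 2 := by
        rw [← hts]; ring
      rw [hE]
      have e1 : |(1 - s) * (p₀ j - ϖ j)| ≤ (1 - s) * ℓ := by
        rw [abs_mul, abs_of_nonneg (by linarith : (0:ℝ) ≤ 1 - s)]
        exact mul_le_mul_of_nonneg_left (hp j) (by linarith)
      have e2 : |s * (p₀ j + h * v₀ j + h ^ 2 / 2 * a j - (ϖ j + δ))| ≤ s * ℓ := by
        rw [abs_mul, abs_of_nonneg hs0]
        exact mul_le_mul_of_nonneg_left h3 hs0
      have e3 : |a j * (t ^ 2 - t * h) / 2| ≤ ℓ / 2 := by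
        rw [abs_div, abs_two]
        linarith
      calc |(1 - s) * (p₀ j - ϖ j) +
            s * (p₀ j + h * v₀ j + h ^ 2 / 2 * a j - (ϖ j + δ)) +
            a j * (t ^ 2 - t * h) / 2|
          ≤ |(1 - s) * (p₀ j - ϖ j) +
              s * (p₀ j + h * v₀ j + h ^ 2 / 2 * a j - (ϖ j + δ))| +
            |a j * (t ^ 2 - t * h) / 2| := abs_add_le _ _
        _ ≤ |(1 - s) * (p₀ j - ϖ j)| +
            |s * (p₀ j + h * v₀ j + h ^ 2 / 2 * a j - (ϖ j + δ))| +
            |a j * (t ^ 2 - t * h) / 2| := by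
              have := abs_add_le ((1 - s) * (p₀ j - ϖ j))
                (s * (p₀ j + h * v₀ j + h ^ 2 / 2 * a j - (ϖ j + δ)))
              linarith
        _ ≤ 3 / 2 * ℓ := by linarith
    have h3 := hp1 j
    simp only [PiLp.add_apply, PiLp.smul_apply, smul_eq_mul,
      EuclideanSpace.single_apply] at h3
    simp only [PiLp.sub_apply, PiLp.add_apply, PiLp.smul_apply, smul_eq_mul,
      EuclideanSpace.single_apply]
    exact main _ h3
  -- from coordinatewise bound to Euclidean norm bound
  have hc : (0 : ℝ) ≤ 3 / 2 * ℓ := by positivity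
  rw [EuclideanSpace.norm_eq]
  have hsum : ∑ j, ‖((p₀ + t • v₀ + (t ^ 2 / 2) • a) -
      ((1 - s) • ϖ + s • (ϖ + ℓ • EuclideanSpace.single i (1 : ℝ)))) j‖ ^ 2
      ≤ ∑ _j : Fin d, (3 / 2 * ℓ) ^ 2 := by
    apply Finset.sum_le_sum
    intro j _
    rw [Real.norm_eq_abs]
    exact pow_le_pow_left₀ (abs_nonneg _) (key j) 2
  refine le_trans (Real.sqrt_le_sqrt hsum) ?_
  have heq : Real.sqrt (∑ _j : Fin d, (3 / 2 * ℓ) ^ 2) = 3 / 2 * ℓ * Real.sqrt d := by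
    rw [Finset.sum_const, Finset.card_univ, Fintype.card_fin, nsmul_eq_mul,
      Real.sqrt_mul (Nat.cast_nonneg d), Real.sqrt_sq hc]
    ring
  exact le_of_eq heq
end

section
/- (Theorem 1, discrete feasibility for an axis-aligned waypoint sequence.) Let ℓ > 0, A_max > 0, V_max = √(ℓ·A_max), h = 2·√(ℓ/A_max). Let K ≥ 1 and let ϖ : {0, …, K} → ℝ^d be a waypoint sequence satisfying: (a) for every k < K, either ϖ(k+1) = ϖ(k), or ϖ(k+1) = ϖ(k) + ℓ·σ·e_i for some coordinate index i and sign σ ∈ {−1, +1}; (b) for every k with 0 < k < K, if ϖ(k) ≠ ϖ(k−1) and ϖ(k+1) ≠ ϖ(k), then ϖ(k+1) − ϖ(k) = ϖ(k) − ϖ(k−1) (the moving direction can change only across a repeated waypoint); (c) every repeated waypoint is isolated and not terminal: if ϖ(k+1) = ϖ(k) for some k < K, then k + 1 < K, ϖ(k+2) ≠ ϖ(k+1), and if k > 0 then ϖ(k) ≠ ϖ(k−1). Then there exist sequences p, v, a : {0, …, K} → ℝ^d with p(0) = ϖ(0), v(0) = 0, satisfying the discrete dynamics p(k+1) = p(k)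 + h·v(k) + (h²/2)·a(k) and v(k+1) = v(k) + h·a(k) for all k < K, and such that for all k ≤ K: ‖p(k) − ϖ(k)‖_∞ ≤ ℓ, ‖v(k)‖_∞ ≤ V_max, and ‖a(k)‖_∞ ≤ A_max. -/
/-- Theorem 1, discrete feasibility for an axis-aligned waypoint
sequence. -/
theorem stmt_8 (d : ℕ) (hd : 1 ≤ d) (ℓ Amax Vmax h : ℝ) (hℓ : 0 < ℓ) (hA : 0 < Amax)
    (hV : Vmax = Real.sqrt (ℓ * Amax)) (hh : h = 2 * Real.sqrt (ℓ / Amax))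
    (K : ℕ) (hK : 1 ≤ K) (ϖ : ℕ → EuclideanSpace ℝ (Fin d))
    -- (a): each step is either a repeat or an ℓ-step along a signed coordinate direction
    (hstep : ∀ k < K, ϖ (k + 1) = ϖ k ∨
      ∃ (i : Fin d) (σ : ℝ), (σ = 1 ∨ σ = -1) ∧
        ϖ (k + 1) = ϖ k + (ℓ * σ) • EuclideanSpace.single i (1 : ℝ))
    -- (b): the moving direction can change only across a repeated waypoint
    (hdir : ∀ m, m + 1 < K → ϖ (m + 1) ≠ ϖ m → ϖ (m + 2) ≠ ϖ (m + 1) →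
      ϖ (m + 2) - ϖ (m + 1) = ϖ (m + 1) - ϖ m)
    -- (c): every repeated waypoint is isolated and not terminal
    (hrep : ∀ k < K, ϖ (k + 1) = ϖ k →
      k + 1 < K ∧ ϖ (k + 2) ≠ ϖ (k + 1) ∧ (0 < k → ϖ k ≠ ϖ (k - 1))) :
    ∃ p v a : ℕ → EuclideanSpace ℝ (Fin d),
      p 0 = ϖ 0 ∧ v 0 = 0 ∧
      (∀ k < K, p (k + 1) = p k + h • v k + (h ^ 2 / 2) • a k ∧
                v (k + 1) = v k + h • a k) ∧
      (∀ k ≤ K, (∀ j, |(p k - ϖ k) j| ≤ ℓ) ∧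
                (∀ j, |v k j| ≤ Vmax) ∧
                (∀ j, |a k j| ≤ Amax)) := by
  classical
  have hdApos : 0 < ℓ / Amax := div_pos hℓ hA
  have hhpos : 0 < h := by
    rw [hh]; positivity
  have hhne : h ≠ 0 := ne_of_gt hhpos
  have hVpos : 0 < Vmax := by
    rw [hV]; exact Real.sqrt_pos.mpr (mul_pos hℓ hA)
  have hhV : h * Vmax = 2 * ℓ := by
    have hmul : Real.sqrt (ℓ / Amax) * Real.sqrt (ℓ * Amax) = ℓ := by
      rw [← Real.sqrt_mul hdApos.le]
      have he : ℓ / Amax * (ℓ * Amax) = ℓ ^ 2 := by field_simp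
      rw [he, Real.sqrt_sq hℓ.le]
    rw [hh, hV, mul_assoc, hmul]
  have hh2 : h ^ 2 = 4 * ℓ / Amax := by
    rw [hh, mul_pow, Real.sq_sqrt hdApos.le]; ring
  -- the truncated waypoint sequence
  set W : ℕ → EuclideanSpace ℝ (Fin d) := fun k => ϖ (min k K) with hWdef
  set R : ℕ → EuclideanSpace ℝ (Fin d) := fun k => if k = 0 then W 1 else W (k - 1)
    with hRdef
  have hR0 : R 0 = W 1 := by simp [hRdef]
  have hRs : ∀ k, R (k + 1) = W k := by intro k; simp [hRdef]
  have hWle : ∀ k ≤ K, W k = ϖ k := by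
    intro k hk; simp [hWdef, min_eq_left hk]
  -- step bound
  have hub : ∀ k, ∀ j : Fin d, |W (k + 1) j - W k j| ≤ ℓ := by
    intro k j
    by_cases hk : k < K
    · have h1 : min (k + 1) K = k + 1 := min_eq_left hk
      have h2 : min k K = k := min_eq_left hk.le
      simp only [hWdef, h1, h2]
      rcases hstep k hk with he | ⟨i, σ, hσ, he⟩
      · simp [he, hℓ.le]
      · rw [he]
        rw [PiLp.add_apply, PiLp.smul_apply, smul_eq_mul, EuclideanSpace.single_apply]
        have hσ1 : |σ| = 1 := by rcases hσ with rfl | rfl <;> simp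
        by_cases hji : j = i
        · rw [if_pos hji, mul_one, add_sub_cancel_left, abs_mul, hσ1, mul_one,
            abs_of_pos hℓ]
        · rw [if_neg hji, mul_zero, add_zero, sub_self, abs_zero]
          exact hℓ.le
    · have h1 : min (k + 1) K = K := min_eq_right (by omega)
      have h2 : min k K = K := min_eq_right (by omega)
      simp [hWdef, h1, h2, hℓ.le]
  have hRb : ∀ k, ∀ j : Fin d, |R k j - W k j| ≤ ℓ := by
    intro k j
    cases k with
    | zero => rw [hR0]; exact hub 0 j
    | succ m => rw [hRs m, abs_sub_comm]; exact hub m j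
  -- velocity component bound
  have hvb : ∀ k, ∀ j : Fin d,
      |((1 / (2 * h)) • (W (k + 1) - R k)) j| ≤ ℓ / h := by
    intro k j
    rw [PiLp.smul_apply, smul_eq_mul, abs_mul]
    have hW1 : |W (k + 1) j - R k j| ≤ 2 * ℓ := by
      calc |W (k + 1) j - R k j|
          = |(W (k + 1) j - W k j) + (W k j - R k j)| := by ring_nf
        _ ≤ |W (k + 1) j - W k j| + |W k j - R k j| := abs_add_le _ _
        _ ≤ ℓ + ℓ := by
            rw [abs_sub_comm (W k j)]
            exact add_le_add (hub k j) (hRb k j)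
        _ = 2 * ℓ := by ring
    have h0 : |1 / (2 * h)| = 1 / (2 * h) := abs_of_pos (by positivity)
    rw [h0, PiLp.sub_apply]
    calc 1 / (2 * h) * |W (k + 1) j - R k j| ≤ 1 / (2 * h) * (2 * ℓ) :=
          mul_le_mul_of_nonneg_left hW1 (by positivity)
      _ = ℓ / h := by field_simp
  refine ⟨fun k => (1 / 4 : ℝ) • (W (k + 1) + (2 : ℝ) • W k + R k
            + (2 : ℝ) • W 0 - (2 : ℝ) • W 1),
          fun k => (1 / (2 * h)) • (W (k + 1) - R k),
          fun k => (1 / h) • ((1 / (2 * h)) • (W (k + 2) - R (k + 1))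
            - (1 / (2 * h)) • (W (k + 1) - R k)), ?_, ?_, ?_, ?_⟩
  · -- p 0 = ϖ 0
    show (1 / 4 : ℝ) • (W 1 + (2 : ℝ) • W 0 + R 0 + (2 : ℝ) • W 0 - (2 : ℝ) • W 1)
      = ϖ 0
    rw [hR0, ← hWle 0 (by omega)]
    module
  · -- v 0 = 0
    show (1 / (2 * h)) • (W 1 - R 0) = 0
    rw [hR0]
    simp
  · -- dynamics
    intro k _
    have hkk : k + 1 + 1 = k + 2 := by omega
    constructor
    · show (1 / 4 : ℝ) • (W (k + 1 + 1) + (2 : ℝ) • W (k + 1) + R (k + 1)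
            + (2 : ℝ) • W 0 - (2 : ℝ) • W 1)
        = (1 / 4 : ℝ) • (W (k + 1) + (2 : ℝ) • W k + R k
            + (2 : ℝ) • W 0 - (2 : ℝ) • W 1)
          + h • ((1 / (2 * h)) • (W (k + 1) - R k))
          + (h ^ 2 / 2) • ((1 / h) • ((1 / (2 * h)) • (W (k + 2) - R (k + 1))
            - (1 / (2 * h)) • (W (k + 1) - R k)))
      rw [hkk, hRs]
      match_scalars <;> field_simp <;> ring
    · show (1 / (2 * h)) • (W (k + 1 + 1) - R (k + 1))
        = (1 / (2 * h)) • (W (k + 1) - R k)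
          + h • ((1 / h) • ((1 / (2 * h)) • (W (k + 2) - R (k + 1))
            - (1 / (2 * h)) • (W (k + 1) - R k)))
      rw [hkk, hRs]
      match_scalars <;> field_simp <;> ring
  · -- bounds
    intro k hk
    refine ⟨?_, ?_, ?_⟩
    · intro j
      show |((1 / 4 : ℝ) • (W (k + 1) + (2 : ℝ) • W k + R k
            + (2 : ℝ) • W 0 - (2 : ℝ) • W 1) - ϖ k) j| ≤ ℓ
      rw [← hWle k hk]
      have hexp : ((1 / 4 : ℝ) • (W (k + 1) + (2 : ℝ) • W k + R k
            + (2 : ℝ) • W 0 - (2 : ℝ) • W 1) - W k) j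
          = (1 / 4) * ((W (k + 1) j - W k j) + (R k j - W k j)
              + 2 * (W 0 j - W 1 j)) := by
        simp only [PiLp.sub_apply, PiLp.smul_apply, PiLp.add_apply, smul_eq_mul]
        ring
      rw [hexp]
      have h1 := hub k j
      have h2 := hRb k j
      have h3 : |W 0 j - W 1 j| ≤ ℓ := by
        rw [abs_sub_comm]; exact hub 0 j
      calc |(1 / 4 : ℝ) * ((W (k + 1) j - W k j) + (R k j - W k j)
              + 2 * (W 0 j - W 1 j))|
          ≤ (1 / 4) * (|W (k + 1) j - W k j| + |R k j - W k j|
              + 2 * |W 0 j - W 1 j|) := by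
            rw [abs_mul, abs_of_pos (by norm_num : (0:ℝ) < 1 / 4)]
            gcongr
            calc |(W (k + 1) j - W k j) + (R k j - W k j) + 2 * (W 0 j - W 1 j)|
                ≤ |(W (k + 1) j - W k j) + (R k j - W k j)|
                  + |2 * (W 0 j - W 1 j)| := abs_add_le _ _
              _ ≤ |W (k + 1) j - W k j| + |R k j - W k j|
                  + 2 * |W 0 j - W 1 j| := by
                  rw [abs_mul, abs_two]
                  exact add_le_add (abs_add_le _ _) le_rfl
        _ ≤ (1 / 4) * (ℓ + ℓ + 2 * ℓ) := by gcongr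
        _ = ℓ := by ring
    · intro j
      show |((1 / (2 * h)) • (W (k + 1) - R k)) j| ≤ Vmax
      have hle : ℓ / h ≤ Vmax := by
        rw [div_le_iff₀ hhpos]
        nlinarith [hhV, hℓ]
      exact le_trans (hvb k j) hle
    · intro j
      show |((1 / h) • ((1 / (2 * h)) • (W (k + 2) - R (k + 1))
            - (1 / (2 * h)) • (W (k + 1) - R k))) j| ≤ Amax
      have h1 := hvb (k + 1) j
      have h2 := hvb k j
      have hkk : k + 1 + 1 = k + 2 := by omega
      rw [hkk] at h1
      rw [PiLp.smul_apply, smul_eq_mul, abs_mul,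
        abs_of_pos (by positivity : (0:ℝ) < 1 / h), PiLp.sub_apply]
      have hsub : |((1 / (2 * h)) • (W (k + 2) - R (k + 1))) j
            - ((1 / (2 * h)) • (W (k + 1) - R k)) j| ≤ ℓ / h + ℓ / h :=
        le_trans (abs_sub _ _) (add_le_add h1 h2)
      calc 1 / h * |((1 / (2 * h)) • (W (k + 2) - R (k + 1))) j
            - ((1 / (2 * h)) • (W (k + 1) - R k)) j|
          ≤ 1 / h * (ℓ / h + ℓ / h) := mul_le_mul_of_nonneg_left hsub (by positivity)
        _ = 2 * ℓ / h ^ 2 := by field_simp; ring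
        _ ≤ Amax := by
            rw [hh2]
            have h4 : 2 * ℓ / (4 * ℓ / Amax) = Amax / 2 := by
              field_simp
              ring
            rw [h4]
            linarith
end

section
/- (Theorem 1, continuous deviation bound.) Let ℓ > 0, A_max > 0, V_max = √(ℓ·A_max), h = 2·√(ℓ/A_max). Let K ≥ 1 and let ϖ : {0, …, K} → ℝ^d satisfy hypotheses (a), (b), (c): (a) for every k < K, either ϖ(k+1) = ϖ(k) or ϖ(k+1) = ϖ(k) + ℓ·σ·e_i for some coordinate index i and sign σ ∈ {−1, +1}; (b) for 0 < k < K, if ϖ(k) ≠ ϖ(k−1) and ϖ(k+1) ≠ ϖ(k) then ϖ(k+1) − ϖ(k) = ϖ(k) − ϖ(k−1); (c) if ϖ(k+1) = ϖ(k) for some k < K then k + 1 < K, ϖ(k+2) ≠ ϖ(k+1), and if k > 0 then ϖ(k) ≠ ϖ(k−1). Then there exist sequences p, v, a : {0, …, K} → ℝ^d with p(0) = ϖ(0), v(0) = 0, satisfying p(k+1) = p(k) + h·v(k) + (h²/2)·a(k), v(k+1) = v(k) + h·a(k), ‖p(k) − ϖ(k)‖_∞ ≤ ℓ, ‖v(k)‖_∞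 ≤ V_max, ‖a(k)‖_∞ ≤ A_max for all k, and such that moreover for every k < K and every t ∈ [0, h], there is a point q on the closed segment joining ϖ(k) and ϖ(k+1) with ‖(p(k) + t·v(k) + (t²/2)·a(k)) − q‖₂ ≤ (3/2)·ℓ·√d. -/
noncomputable def stmt9D (d K : ℕ) (ϖ : ℕ → EuclideanSpace ℝ (Fin d)) :
    ℕ → EuclideanSpace ℝ (Fin d) :=
  fun k => if k < K then ϖ (k + 1) - ϖ k else 0

noncomputable def stmt9Dm (d K : ℕ) (ϖ : ℕ → EuclideanSpace ℝ (Fin d)) :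
    ℕ → EuclideanSpace ℝ (Fin d) :=
  fun k => match k with
  | 0 => 0
  | n + 1 => stmt9D d K ϖ n

lemma stmt9_norm_aux {d : ℕ} (y : EuclideanSpace ℝ (Fin d)) (c : ℝ) (hc : 0 ≤ c)
    (hy : ∀ j, |y j| ≤ c) : ‖y‖ ≤ c * Real.sqrt d := by
  rw [EuclideanSpace.norm_eq]
  have h1 : ∑ j, ‖y j‖ ^ 2 ≤ ∑ _j : Fin d, c ^ 2 :=
    Finset.sum_le_sum fun j _ => by
      rw [Real.norm_eq_abs]
      exact pow_le_pow_left₀ (abs_nonneg _) (hy j) 2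
  calc Real.sqrt (∑ j, ‖y j‖ ^ 2) ≤ Real.sqrt ((d : ℝ) * c ^ 2) := by
        apply Real.sqrt_le_sqrt
        simpa [Finset.sum_const, Finset.card_univ] using h1
    _ = c * Real.sqrt d := by
        rw [Real.sqrt_mul (by positivity), Real.sqrt_sq hc]; ring


set_option maxHeartbeats 1600000 in
/-- Theorem 1, continuous deviation bound: the piecewise
constant-acceleration trajectory interpolating the discrete states stays
within Euclidean distance (3/2)·ℓ·√d of the polyline through the waypoints. -/
theorem stmt_9 (d : ℕ) (hd : 1 ≤ d) (ℓ Amax Vmax h : ℝ) (hℓ : 0 < ℓ) (hA : 0 < Amax)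
    (hV : Vmax = Real.sqrt (ℓ * Amax)) (hh : h = 2 * Real.sqrt (ℓ / Amax))
    (K : ℕ) (hK : 1 ≤ K) (ϖ : ℕ → EuclideanSpace ℝ (Fin d))
    -- (a): each step is either a repeat or an ℓ-step along a signed coordinate direction
    (hstep : ∀ k < K, ϖ (k + 1) = ϖ k ∨
      ∃ (i : Fin d) (σ : ℝ), (σ = 1 ∨ σ = -1) ∧
        ϖ (k + 1) = ϖ k + (ℓ * σ) • EuclideanSpace.single i (1 : ℝ))
    -- (b): the moving direction can change only across a repeated waypoint
    (hdir : ∀ m, m + 1 < K → ϖ (m + 1) ≠ ϖ m → ϖ (m + 2) ≠ ϖ (m + 1) →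
      ϖ (m + 2) - ϖ (m + 1) = ϖ (m + 1) - ϖ m)
    -- (c): every repeated waypoint is isolated and not terminal
    (hrep : ∀ k < K, ϖ (k + 1) = ϖ k →
      k + 1 < K ∧ ϖ (k + 2) ≠ ϖ (k + 1) ∧ (0 < k → ϖ k ≠ ϖ (k - 1))) :
    ∃ p v a : ℕ → EuclideanSpace ℝ (Fin d),
      p 0 = ϖ 0 ∧ v 0 = 0 ∧
      (∀ k < K, p (k + 1) = p k + h • v k + (h ^ 2 / 2) • a k ∧
                v (k + 1) = v k + h • a k) ∧
      (∀ k ≤ K, (∀ j, |(p k - ϖ k) j| ≤ ℓ) ∧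
                (∀ j, |v k j| ≤ Vmax) ∧
                (∀ j, |a k j| ≤ Amax)) ∧
      (∀ k < K, ∀ t ∈ Set.Icc (0 : ℝ) h,
        ∃ q ∈ segment ℝ (ϖ k) (ϖ (k + 1)),
          ‖(p k + t • v k + (t ^ 2 / 2) • a k) - q‖ ≤ 3 / 2 * ℓ * Real.sqrt d) := by
  set D := stmt9D d K ϖ with hDdef
  set Dm := stmt9Dm d K ϖ with hDmdef
  -- basic positivity facts
  have hℓA : (0:ℝ) < ℓ / Amax := div_pos hℓ hA
  have hpos : 0 < h := by rw [hh]; positivity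
  have hne : h ≠ 0 := ne_of_gt hpos
  have hh2 : h ^ 2 = 4 * (ℓ / Amax) := by
    rw [hh, mul_pow, Real.sq_sqrt hℓA.le]; ring
  have hVpos : 0 < Vmax := by rw [hV]; positivity
  have hhV : h * Vmax = 2 * ℓ := by
    rw [hh, hV, mul_assoc, mul_comm (Real.sqrt (ℓ/Amax)),
      ← Real.sqrt_mul (by positivity)]
    rw [show ℓ * Amax * (ℓ / Amax) = ℓ ^ 2 by field_simp, Real.sqrt_sq hℓ.le]
  -- coordinatewise bound on D
  have hD : ∀ k, ∀ j, |D k j| ≤ ℓ := by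
    intro k j
    rw [hDdef]
    unfold stmt9D
    by_cases hk : k < K
    · simp only [hk, if_true]
      rcases hstep k hk with h1 | ⟨i, σ, hσ, h1⟩
      · simp [h1, abs_nonneg, hℓ.le]
      · have : (ϖ (k+1) - ϖ k) j = (ℓ * σ) * (EuclideanSpace.single i (1:ℝ)) j := by
          rw [h1]; simp
        rw [this, EuclideanSpace.single_apply]
        rcases hσ with rfl | rfl <;> by_cases hij : j = i <;>
          simp [hij, abs_of_pos hℓ, hℓ.le, abs_mul]
    · simp [hk, hℓ.le]
  have hDm : ∀ k, ∀ j, |Dm k j| ≤ ℓ := by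
    intro k j
    match k with
    | 0 => simp [hDmdef, stmt9Dm, hℓ.le]
    | n + 1 => exact hD n j
  have hDmsucc : ∀ k, Dm (k + 1) = D k := fun k => rfl
  have hDm0 : Dm 0 = 0 := rfl
  have hDeq : ∀ k < K, D k = ϖ (k + 1) - ϖ k := by
    intro k hk; rw [hDdef]; unfold stmt9D; simp [hk]
  clear_value D Dm
  clear hDdef hDmdef
  refine ⟨fun k => ϖ k - (2⁻¹ : ℝ) • Dm k,
          fun k => h⁻¹ • Dm k,
          fun k => (h ^ 2)⁻¹ • (D k - Dm k), ?_, ?_, ?_, ?_, ?_⟩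
  · simp [hDm0]
  · simp [hDm0]
  · intro k hk
    constructor
    · show ϖ (k+1) - (2⁻¹ : ℝ) • Dm (k+1) = (ϖ k - (2⁻¹ : ℝ) • Dm k) + h • (h⁻¹ • Dm k)
        + (h ^ 2 / 2) • ((h ^ 2)⁻¹ • (D k - Dm k))
      rw [hDmsucc k, hDeq k hk]
      match_scalars <;> field_simp <;> try ring
    · show h⁻¹ • Dm (k+1) = h⁻¹ • Dm k + h • ((h ^ 2)⁻¹ • (D k - Dm k))
      rw [hDmsucc k]
      match_scalars <;> field_simp <;> try ring
  · intro k _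
    refine ⟨?_, ?_, ?_⟩
    · intro j
      have : (ϖ k - (2⁻¹ : ℝ) • Dm k - ϖ k) j = -(2⁻¹ * Dm k j) := by
        simp
        try ring
      rw [this, abs_neg, abs_mul]
      have := hDm k j
      rw [abs_of_pos (by norm_num : (0:ℝ) < (2:ℝ)⁻¹)]
      nlinarith
    · intro j
      show |(h⁻¹ • Dm k) j| ≤ Vmax
      have : (h⁻¹ • Dm k) j = h⁻¹ * Dm k j := rfl
      rw [this, abs_mul, abs_of_pos (inv_pos.mpr hpos)]
      have h1 := hDm k j
      rw [inv_mul_le_iff₀ hpos]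
      nlinarith
    · intro j
      show |((h ^ 2)⁻¹ • (D k - Dm k)) j| ≤ Amax
      have : ((h ^ 2)⁻¹ • (D k - Dm k)) j = (h ^ 2)⁻¹ * (D k j - Dm k j) := by
        simp
      rw [this, abs_mul, abs_of_pos (by positivity : (0:ℝ) < (h ^ 2)⁻¹)]
      have h1 := hD k j
      have h2 := hDm k j
      have h3 : |D k j - Dm k j| ≤ 2 * ℓ := by
        calc |D k j - Dm k j| ≤ |D k j| + |Dm k j| := abs_sub _ _
          _ ≤ 2 * ℓ := by linarith
      rw [inv_mul_le_iff₀ (by positivity)]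
      have h2A : h ^ 2 * Amax = 4 * ℓ := by rw [hh2]; field_simp
      nlinarith [h2A, h3]
  · intro k hk t ht
    obtain ⟨ht0, hth⟩ := ht
    obtain ⟨u, hu0, hu1, rfl⟩ : ∃ u : ℝ, 0 ≤ u ∧ u ≤ 1 ∧ t = u * h :=
      ⟨t / h, div_nonneg ht0 hpos.le, (div_le_one hpos).mpr hth, by field_simp⟩
    refine ⟨ϖ k + u • (ϖ (k + 1) - ϖ k), ⟨1 - u, u, by linarith, hu0, by ring, by
      module⟩, ?_⟩
    have key : (ϖ k - (2⁻¹ : ℝ) • Dm k) + (u * h) • (h⁻¹ • Dm k)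
        + ((u * h) ^ 2 / 2) • ((h ^ 2)⁻¹ • (D k - Dm k))
        - (ϖ k + u • (ϖ (k + 1) - ϖ k))
        = (-(1:ℝ)/2 + u - u ^ 2 / 2) • Dm k + (u ^ 2 / 2 - u) • D k := by
      rw [hDeq k hk]
      match_scalars <;> field_simp <;> try ring
    rw [key]
    clear key
    have hc1 : |(-(1:ℝ)/2 + u - u ^ 2 / 2)| ≤ 1/2 := by
      rw [abs_le]; constructor <;> nlinarith
    have hc2 : |(u ^ 2 / 2 - u)| ≤ 1/2 := by
      rw [abs_le]; constructor <;> nlinarith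
    have hbound : ∀ j, |((-(1:ℝ)/2 + u - u ^ 2 / 2) • Dm k + (u ^ 2 / 2 - u) • D k) j| ≤ ℓ := by
      intro j
      have e : ((-(1:ℝ)/2 + u - u ^ 2 / 2) • Dm k + (u ^ 2 / 2 - u) • D k) j
          = (-(1:ℝ)/2 + u - u ^ 2 / 2) * Dm k j + (u ^ 2 / 2 - u) * D k j := by simp
      rw [e]
      calc |(-(1:ℝ)/2 + u - u ^ 2 / 2) * Dm k j + (u ^ 2 / 2 - u) * D k j|
          ≤ |(-(1:ℝ)/2 + u - u ^ 2 / 2)| * |Dm k j| + |(u ^ 2 / 2 - u)| * |D k j| := by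
            calc _ ≤ |(-(1:ℝ)/2 + u - u ^ 2 / 2) * Dm k j| + |(u ^ 2 / 2 - u) * D k j| :=
                  abs_add_le _ _
              _ = _ := by rw [abs_mul, abs_mul]
        _ ≤ (1/2) * ℓ + (1/2) * ℓ := by
            have := hDm k j; have := hD k j
            have h1 : |(-(1:ℝ)/2 + u - u ^ 2 / 2)| * |Dm k j| ≤ (1/2) * ℓ :=
              mul_le_mul hc1 (hDm k j) (abs_nonneg _) (by norm_num)
            have h2 : |(u ^ 2 / 2 - u)| * |D k j| ≤ (1/2) * ℓ :=
              mul_le_mul hc2 (hD k j) (abs_nonneg _) (by norm_num)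
            linarith
        _ = ℓ := by ring
    calc ‖((-(1:ℝ)/2 + u - u ^ 2 / 2) • Dm k + (u ^ 2 / 2 - u) • D k)‖
        ≤ ℓ * Real.sqrt d := stmt9_norm_aux _ ℓ hℓ.le hbound
      _ ≤ 3 / 2 * ℓ * Real.sqrt d := by
          have : (0:ℝ) ≤ Real.sqrt d := Real.sqrt_nonneg _
          nlinarith
end

section
/- (Ellipsoid sampling map covers only the informed set.) Let d ≥ 1, let p_start, p_goal ∈ ℝ^d with p_start ≠ p_goal, set c_min = ‖p_goal − p_start‖₂ and x_centre = (p_start + p_goal)/2, and let c_best ≥ c_min. Let L be the d × d diagonal matrix with first diagonal entry c_best/2 and all remaining diagonal entries √(c_best² − c_min²)/2, and let C be an orthogonal d × d matrix with determinant 1 mapping the first standard basis vector e₁ to the unit vector (p_goal − p_start)/c_min. Then for every u ∈ ℝ^d with ‖u‖₂ ≤ 1, the point x = C·L·u + x_centre satisfies ‖p_start − x‖₂ + ‖x − p_goal‖₂ ≤ c_best; i.e., the image of the closed unit ball under the map u ↦ C·L·u + x_centre is contained in χ_inform = {x ∈ ℝ^d : ‖p_start − x‖₂ + ‖x − p_goal‖₂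 ≤ c_best}. -/
open scoped Matrix


/-- the ellipsoid sampling map u ↦ C·L·u + x_centre sends the
closed unit ball into the informed set χ_inform. -/
theorem stmt_12 (d : ℕ) (hd : 0 < d)
    (pstart pgoal : EuclideanSpace ℝ (Fin d)) (hne : pstart ≠ pgoal)
    (cmin cbest : ℝ) (hcmin : cmin = ‖pgoal - pstart‖) (hcb : cmin ≤ cbest)
    (xcentre : EuclideanSpace ℝ (Fin d))
    (hxc : xcentre = (2 : ℝ)⁻¹ • (pstart + pgoal))
    (L C : Matrix (Fin d) (Fin d) ℝ)
    (hL : L = Matrix.diagonal (fun i =>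
      if i = (⟨0, hd⟩ : Fin d) then cbest / 2
      else Real.sqrt (cbest ^ 2 - cmin ^ 2) / 2))
    (hC : C ∈ Matrix.orthogonalGroup (Fin d) ℝ) (hdet : C.det = 1)
    (hCe : ∀ i, C.mulVec (Pi.single (⟨0, hd⟩ : Fin d) (1 : ℝ)) i
      = (pgoal - pstart) i / cmin)
    (u : EuclideanSpace ℝ (Fin d)) (hu : ‖u‖ ≤ 1)
    (x : EuclideanSpace ℝ (Fin d))
    (hx : ∀ i, x i = C.mulVec (L.mulVec (fun j => u j)) i + xcentre i) :
    ‖pstart - x‖ + ‖x - pgoal‖ ≤ cbest := by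
  classical
  set i0 : Fin d := ⟨0, hd⟩ with hi0
  set a : ℝ := cbest / 2 with ha
  set c : ℝ := cmin / 2 with hcdef
  set b : ℝ := Real.sqrt (cbest ^ 2 - cmin ^ 2) / 2 with hbdef
  have hcmin_pos : 0 < cmin := by
    rw [hcmin]
    exact norm_pos_iff.mpr (sub_ne_zero.mpr (Ne.symm hne))
  have hca : c ≤ a := by rw [ha, hcdef]; linarith
  have hc0 : 0 < c := by rw [hcdef]; linarith
  have hsqnn : (0:ℝ) ≤ cbest ^ 2 - cmin ^ 2 := by nlinarith
  have hb2 : b ^ 2 = a ^ 2 - c ^ 2 := by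
    rw [hbdef, ha, hcdef, div_pow, Real.sq_sqrt hsqnn]; ring
  -- transpose * C = 1
  have hCt : C.transpose * C = 1 := by
    have h := hC.1
    have hstar : star C = C.transpose := by
      ext i j; simp [Matrix.star_apply]
    rwa [hstar] at h
  -- orthogonal preserves sum of squares
  have hCnorm : ∀ w : Fin d → ℝ, ∑ i, (C.mulVec w i) ^ 2 = ∑ i, (w i) ^ 2 := by
    intro w
    have h1 : (C.mulVec w) ⬝ᵥ (C.mulVec w) = w ⬝ᵥ w := by
      rw [Matrix.dotProduct_mulVec, ← Matrix.mulVec_transpose,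
        Matrix.mulVec_mulVec, hCt, Matrix.one_mulVec]
    simpa [dotProduct, sq] using h1
  -- sum of squares of u
  have husum : ∑ i, (u i) ^ 2 ≤ 1 := by
    have h1 : ‖u‖ ^ 2 ≤ 1 := by nlinarith [norm_nonneg u]
    have h2 : ‖u‖ ^ 2 = ∑ i, (u i) ^ 2 := by
      rw [EuclideanSpace.norm_eq, Real.sq_sqrt (by positivity)]
      simp [Real.norm_eq_abs, sq_abs]
    linarith [h2 ▸ h1]
  set u0 : ℝ := u i0 with hu0
  have hu0sq : u0 ^ 2 ≤ 1 := by
    have hle : u0 ^ 2 ≤ ∑ i, (u i) ^ 2 :=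
      Finset.single_le_sum (f := fun i => (u i) ^ 2)
        (fun i _ => sq_nonneg _) (Finset.mem_univ i0)
    linarith
  have hu0abs : -1 ≤ u0 ∧ u0 ≤ 1 := ⟨by nlinarith, by nlinarith⟩
  set e1 : Fin d → ℝ := Pi.single i0 1 with he1
  clear_value i0 a c b u0 e1
  -- key sum-of-squares bound for either focus
  have key : ∀ ε : ℝ, ε = 1 ∨ ε = -1 →
      Real.sqrt (∑ i, ((L.mulVec (fun j => u j)) i + ε * c * e1 i) ^ 2)
        ≤ a + ε * c * u0 := by
    intro ε hε
    have hε2 : ε ^ 2 = 1 := by rcases hε with h | h <;> simp [h]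
    have hterm : ∀ i, (L.mulVec (fun j => u j)) i + ε * c * e1 i
        = if i = i0 then a * u0 + ε * c else b * u i := by
      intro i
      rw [hL, Matrix.mulVec_diagonal]
      by_cases h : i = i0
      · subst h; simp [he1, hu0]
      · simp [he1, Pi.single_apply, h]
    have herase : ∑ i ∈ Finset.univ.erase i0, (u i) ^ 2 = (∑ i, (u i) ^ 2) - u0 ^ 2 := by
      have h : (u i0) ^ 2 + ∑ i ∈ Finset.univ.erase i0, (u i) ^ 2 = ∑ i, (u i) ^ 2 :=
        Finset.add_sum_erase Finset.univ (fun i => (u i) ^ 2) (Finset.mem_univ i0)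
      rw [← hu0] at h
      linarith [h]
    have hsum : ∑ i, ((L.mulVec (fun j => u j)) i + ε * c * e1 i) ^ 2
        = (a * u0 + ε * c) ^ 2 + b ^ 2 * ((∑ i, (u i) ^ 2) - u0 ^ 2) := by
      have h1 : ∑ i, ((L.mulVec (fun j => u j)) i + ε * c * e1 i) ^ 2
          = ∑ i, (if i = i0 then (a * u0 + ε * c) ^ 2 else b ^ 2 * (u i) ^ 2) := by
        refine Finset.sum_congr rfl fun i _ => ?_
        rw [hterm i]
        by_cases h : i = i0
        · rw [if_pos h, if_pos h]
        · rw [if_neg h, if_neg h]; ring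
      rw [h1, ← Finset.add_sum_erase _ _ (Finset.mem_univ i0), if_pos rfl]
      congr 1
      rw [Finset.sum_congr rfl (fun i hi => if_neg (Finset.mem_erase.mp hi).1),
        ← Finset.mul_sum, herase]
    have hexp : (a * u0 + ε * c) ^ 2 + b ^ 2 * ((∑ i, (u i) ^ 2) - u0 ^ 2)
        = (a + ε * c * u0) ^ 2 - b ^ 2 * (1 - ∑ i, (u i) ^ 2)
          + (ε ^ 2 - 1) * (c ^ 2 * (1 - u0 ^ 2)) := by
      linear_combination (1 - u0 ^ 2) * hb2
    have h0 : 0 ≤ b ^ 2 * (1 - ∑ i, (u i) ^ 2) :=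
      mul_nonneg (sq_nonneg b) (by linarith)
    have hbound : ∑ i, ((L.mulVec (fun j => u j)) i + ε * c * e1 i) ^ 2
        ≤ (a + ε * c * u0) ^ 2 := by
      rw [hsum, hexp, hε2]
      linarith
    have hεu : -1 ≤ ε * u0 := by
      rcases hε with h | h <;> rw [h] <;> linarith [hu0abs.1, hu0abs.2]
    have hpos : 0 ≤ a + ε * c * u0 := by
      have h3 : c * (-1) ≤ c * (ε * u0) := mul_le_mul_of_nonneg_left hεu hc0.le
      linarith [h3]
    calc Real.sqrt (∑ i, ((L.mulVec (fun j => u j)) i + ε * c * e1 i) ^ 2)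
        ≤ Real.sqrt ((a + ε * c * u0) ^ 2) := Real.sqrt_le_sqrt hbound
      _ = a + ε * c * u0 := Real.sqrt_sq hpos
  -- identify pstart - x and x - pgoal
  have hsub1 : ∀ i, (pstart - x) i = pstart i - x i := fun i => rfl
  have hsub2 : ∀ i, (x - pgoal) i = x i - pgoal i := fun i => rfl
  have hsub3 : ∀ i, (pgoal - pstart) i = pgoal i - pstart i := fun i => rfl
  have hxcapp : ∀ i, xcentre i = (2:ℝ)⁻¹ * (pstart i + pgoal i) := by
    intro i; rw [hxc]; rfl
  have harg1 : (fun j => (L.mulVec (fun j => u j)) j + 1 * c * e1 j)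
      = ((L.mulVec (fun j => u j)) + c • e1) := by
    funext j; simp [Pi.add_apply]
  have harg2 : (fun j => (L.mulVec (fun j => u j)) j + (-1) * c * e1 j)
      = ((L.mulVec (fun j => u j)) - c • e1) := by
    funext j; simp [Pi.sub_apply]; ring
  have hCp : ∀ i, (C.mulVec (fun j => (L.mulVec (fun j => u j)) j + 1 * c * e1 j)) i
      = (C.mulVec (L.mulVec (fun j => u j))) i + c * ((pgoal i - pstart i) / cmin) := by
    intro i
    rw [harg1, Matrix.mulVec_add, Matrix.mulVec_smul]
    simp only [Pi.add_apply, Pi.smul_apply, smul_eq_mul, hCe i, hsub3 i]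
  have hCm : ∀ i, (C.mulVec (fun j => (L.mulVec (fun j => u j)) j + (-1) * c * e1 j)) i
      = (C.mulVec (L.mulVec (fun j => u j))) i - c * ((pgoal i - pstart i) / cmin) := by
    intro i
    rw [harg2, Matrix.mulVec_sub, Matrix.mulVec_smul]
    simp only [Pi.sub_apply, Pi.smul_apply, smul_eq_mul, hCe i, hsub3 i]
  have hxi : ∀ i, (pstart - x) i
      = -(C.mulVec (fun j => (L.mulVec (fun j => u j)) j + 1 * c * e1 j)) i := by
    intro i
    rw [hsub1 i, hx i, hxcapp i, hCp i, hcdef]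
    field_simp
    ring
  have hxi2 : ∀ i, (x - pgoal) i
      = (C.mulVec (fun j => (L.mulVec (fun j => u j)) j + (-1) * c * e1 j)) i := by
    intro i
    rw [hsub2 i, hx i, hxcapp i, hCm i, hcdef]
    field_simp
    ring
  -- norms
  have hn1 : ‖pstart - x‖ ≤ a + 1 * c * u0 := by
    rw [EuclideanSpace.norm_eq]
    simp only [Real.norm_eq_abs, sq_abs]
    calc Real.sqrt (∑ i, ((pstart - x) i) ^ 2)
        = Real.sqrt (∑ i,
            ((C.mulVec (fun j => (L.mulVec (fun j => u j)) j + 1 * c * e1 j)) i) ^ 2) := by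
          congr 1
          exact Finset.sum_congr rfl fun i _ => by rw [hxi i, neg_sq]
      _ = Real.sqrt (∑ i, ((L.mulVec (fun j => u j)) i + 1 * c * e1 i) ^ 2) := by
          rw [hCnorm]
      _ ≤ a + 1 * c * u0 := key 1 (Or.inl rfl)
  have hn2 : ‖x - pgoal‖ ≤ a + (-1) * c * u0 := by
    rw [EuclideanSpace.norm_eq]
    simp only [Real.norm_eq_abs, sq_abs]
    calc Real.sqrt (∑ i, ((x - pgoal) i) ^ 2)
        = Real.sqrt (∑ i,
            ((C.mulVec (fun j => (L.mulVec (fun j => u j)) j + (-1) * c * e1 j)) i) ^ 2) := by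
          congr 1
          exact Finset.sum_congr rfl fun i _ => by rw [hxi2 i]
      _ = Real.sqrt (∑ i, ((L.mulVec (fun j => u j)) i + (-1) * c * e1 i) ^ 2) := by
          rw [hCnorm]
      _ ≤ a + (-1) * c * u0 := key (-1) (Or.inr rfl)
  have hfin : a + a = cbest := by rw [ha]; ring
  linarith
end
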